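/- For the coloring function c(i,j) = (j - f_{m'}(i mod m')) mod m' on the grid {0,...,n/d - 1}^2 with m' dividing n/d, the color class L_k = {(i,j) : c(i,j) = k} equals the shifted tiled Van der Corput set T_k = {(q + x·m', (f_{m'}(q) + y·m' + k) mod (n/d)) : x,y ∈ {0,...,n/(d·m')-1}, q ∈ {0,...,m'-1}}, for every k ∈ {0,...,m'-1}. -/

import Mathlib

/-- Bit-reversing function. -/
def bitRev (c z : ℕ) : ℕ := ∑ i ∈ Finset.range c, (z / 2 ^ i % 2) * 2 ^ (c - 1 - i)

lemma sum_two_pow (c : ℕ) : ∑ i ∈ Finset.range c, 2 ^ i = 2 ^ c - 1 := by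
  induction c with
  | zero => simp
  | succ n ih => rw [Finset.sum_range_succ, ih]; have := Nat.one_le_two_pow (n := n); ring_nf; omega

lemma bitRev_lt (c z : ℕ) : bitRev c z < 2 ^ c := by
  have h1 : bitRev c z ≤ ∑ i ∈ Finset.range c, 2 ^ (c - 1 - i) := by
    apply Finset.sum_le_sum
    intro i _
    have : z / 2 ^ i % 2 ≤ 1 := by omega
    calc (z / 2 ^ i % 2) * 2 ^ (c - 1 - i) ≤ 1 * 2 ^ (c - 1 - i) :=
          Nat.mul_le_mul_right _ this
      _ = 2 ^ (c - 1 - i) := one_mul _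
  have h2 : ∑ i ∈ Finset.range c, 2 ^ (c - 1 - i) = 2 ^ c - 1 := by
    rw [Finset.sum_range_reflect (fun i => 2 ^ i) c, sum_two_pow]
  have : 0 < 2 ^ c := Nat.two_pow_pos _
  omega

/-- For the coloring `col(i,j) = (j - f_{m'}(i mod m')) mod m'` on the grid
`{0,...,n/d-1}²` with `m' = 2^c` dividing `n/d`, the color class `L_k` equals the
shifted tiled Van der Corput set `T_k`. -/
theorem color_class_eq_shifted_tiled_vdc (c n d k : ℕ) (hc : 0 < c) (hn : 0 < n)
    (hd : 0 < d) (hdvd : 2 ^ c ∣ n / d) (hk : k < 2 ^ c) :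
    {p : ℕ × ℕ | p.1 < n / d ∧ p.2 < n / d ∧
        ((p.2 : ℤ) - bitRev c (p.1 % 2 ^ c)) % (2 ^ c : ℕ) = k} =
    {p : ℕ × ℕ | ∃ x < n / (d * 2 ^ c), ∃ y < n / (d * 2 ^ c), ∃ q < 2 ^ c,
        p = (q + x * 2 ^ c, (bitRev c q + y * 2 ^ c + k) % (n / d))} := by
  have hm0 : 0 < 2 ^ c := Nat.two_pow_pos _
  set m : ℕ := 2 ^ c with hm
  set N : ℕ := n / d with hNdef
  set M : ℕ := N / m with hMdef
  have hndm : n / (d * m) = M := by rw [hMdef, hNdef, Nat.div_div_eq_div_mul]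
  have hMN : M * m = N := Nat.div_mul_cancel hdvd
  ext ⟨i, j⟩
  simp only [Set.mem_setOf_eq, hndm, Prod.mk.injEq]
  constructor
  · rintro ⟨hi, hj, hcol⟩
    have hN0 : 0 < N := lt_of_le_of_lt (Nat.zero_le i) hi
    have hM0 : 0 < M := Nat.div_pos (Nat.le_of_dvd hN0 hdvd) hm0
    set B : ℕ := bitRev c (i % m) with hB
    have hBlt : B < m := bitRev_lt c _
    -- derive j % m = (B + k) % m
    have hdvdZ : (m : ℤ) ∣ (j : ℤ) - ((B : ℤ) + k) := by
      apply Int.dvd_of_emod_eq_zero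
      have hkk : (k : ℤ) % m = k := Int.emod_eq_of_lt (by positivity) (by exact_mod_cast hk)
      rw [← sub_sub, Int.sub_emod, hcol, hkk, sub_self, Int.zero_emod]
    have hjm : j % m = (B + k) % m := by
      have h1 : (j : ℤ) % m = ((B : ℤ) + k) % m :=
        Int.ModEq.symm (Int.modEq_iff_dvd.mpr (by simpa using hdvdZ))
      have h2 : ((j % m : ℕ) : ℤ) = (((B + k) % m : ℕ) : ℤ) := by push_cast; exact h1
      exact_mod_cast h2
    set r : ℕ := (B + k) % m with hr
    set s : ℕ := (B + k) / m with hs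
    set t : ℕ := j / m with ht
    have hs1 : s ≤ 1 := by
      have : (B + k) / m < 2 := (Nat.div_lt_iff_lt_mul hm0).mpr (by omega)
      omega
    have htM : t < M := (Nat.div_lt_iff_lt_mul hm0).mpr (by omega)
    set y : ℕ := (t + M - s) % M with hy
    have h2 : (s + y) % M = t := by
      calc (s + y) % M = (s + (t + M - s)) % M := by rw [hy, Nat.add_mod_mod]
        _ = (t + M) % M := by congr 1; rw [Nat.add_sub_cancel' (le_trans hs1 (le_trans hM0 (Nat.le_add_left M t)))]
        _ = t := by rw [Nat.add_mod_right]; exact Nat.mod_eq_of_lt htM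
    obtain ⟨u, hu⟩ : ∃ u, u * M + t = s + y := ⟨(s + y) / M, by rw [← h2]; exact Nat.div_add_mod' (s + y) M⟩
    have e1 : s * m + r = B + k := Nat.div_add_mod' (B + k) m
    have e2 : r + t * m = j := by
      have := Nat.mod_add_div' j m; rw [hjm] at this; exact this
    have key : B + y * m + k = j + u * N := by
      have e1' : (s : ℤ) * m + r = (B : ℤ) + k := by exact_mod_cast e1
      have e2' : (r : ℤ) + t * m = j := by exact_mod_cast e2
      have hMN' : (M : ℤ) * m = N := by exact_mod_cast hMN
      have hu' : (u : ℤ) * M + t = s + y := by exact_mod_cast hu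
      zify
      linear_combination (-1 : ℤ) * e1' + e2' + (u : ℤ) * hMN' + (-(m : ℤ)) * hu'
    refine ⟨i / m, (Nat.div_lt_iff_lt_mul hm0).mpr (by omega), y, Nat.mod_lt _ hM0,
      i % m, Nat.mod_lt _ hm0, (Nat.mod_add_div' i m).symm, ?_⟩
    rw [← hB, key, Nat.add_mul_mod_self_right, Nat.mod_eq_of_lt hj]
  · rintro ⟨x, hx, y, hy, q, hq, h1, h2⟩
    subst h1; subst h2
    have hN0 : 0 < N := by
      have : 1 * m ≤ M * m := Nat.mul_le_mul_right m (by omega)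
      omega
    have hiN : q + x * m < N := by
      have : (x + 1) * m ≤ M * m := Nat.mul_le_mul_right m (by omega)
      rw [add_mul] at this
      omega
    refine ⟨hiN, Nat.mod_lt _ hN0, ?_⟩
    have hqm : (q + x * m) % m = q := by
      rw [Nat.add_mul_mod_self_right, Nat.mod_eq_of_lt hq]
    rw [hqm]
    set B : ℕ := bitRev c q with hB
    set j' : ℕ := (B + y * m + k) % N with hj'
    have hj'm : j' % m = (B + k) % m := by
      rw [hj', Nat.mod_mod_of_dvd _ hdvd]
      have : B + y * m + k = B + k + y * m := by ring
      rw [this, Nat.add_mul_mod_self_right]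
    have hZ : (j' : ℤ) % m = ((B : ℤ) + k) % m := by
      have := congrArg (Nat.cast : ℕ → ℤ) hj'm
      push_cast at this
      exact this
    have hdvd2 : (m : ℤ) ∣ (j' : ℤ) - ((B : ℤ) + k) :=
      Int.ModEq.dvd (Int.ModEq.symm hZ)
    obtain ⟨w, hw⟩ := hdvd2
    have hrw : (j' : ℤ) - B = k + m * w := by linarith
    rw [hrw, Int.add_mul_emod_self_left]
    exact Int.emod_eq_of_lt (by positivity) (by exact_mod_cast hk)
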